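/- The one-player game with actions {0,1} and payoff u(r) = 0 if r is constantly 1, and u(r) = (1−δ)·Σ_{n≤0} δ^{−n} r(n) otherwise (with 0 < δ < 1), admits no equilibrium: for every run r there exists a stage n and a run r' agreeing with r on stages < n such that u(r') > u(r). -/
import Mathlib


/-- Stages: non-positive integers. -/
abbrev Stage : Type := {n : ℤ // n ≤ 0}

/-- A run assigns an action to each stage. -/
abbrev Run (A : Type) : Type := Stage → A

/-- A position at stage `n` records the actions at all stages `k < n`. -/
abbrev Position (A : Type) (n : ℤ) : Type := {k : ℤ // k < n} → A

/-- The space of all positions. -/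
abbrev Pos (A : Type) : Type := Σ n : Stage, Position A n.1

/-- The position induced by a run `r` at stage `n`. -/
def restrictRun {A : Type} (r : Run A) (n : Stage) : Position A n.1 :=
  fun k => r ⟨k.1, le_trans k.2.le n.2⟩

/- The payoff: `0` if the run is constantly `1`, and otherwise the reversed-time discounted
sum `(1 - δ) * ∑ δ^(-n) r(n)`. -/
open Classical in
noncomputable def discPayoff (δ : ℝ) (r : Run (Fin 2)) : ℝ :=
  if ∀ n : Stage, r n = 1 then 0
  else (1 - δ) * ∑' n : Stage, δ ^ (-n.1).toNat * ((r n).val : ℝ)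

noncomputable section

def stEquiv : ℕ ≃ Stage where
  toFun k := ⟨-(k:ℤ), by simp⟩
  invFun n := (-n.1).toNat
  left_inv k := by simp
  right_inv n := by
    ext
    simp [Int.toNat_of_nonneg (neg_nonneg.2 n.2)]

lemma stEquiv_val (k : ℕ) : (stEquiv k).1 = -(k:ℤ) := rfl

lemma payoff_eq (δ : ℝ) (r : Run (Fin 2)) :
    ∑' n : Stage, δ ^ (-n.1).toNat * ((r n).val : ℝ)
      = ∑' k : ℕ, δ ^ k * ((r (stEquiv k)).val : ℝ) := by
  rw [← stEquiv.tsum_eq (f := fun n : Stage => δ ^ (-n.1).toNat * ((r n).val : ℝ))]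
  congr 1; funext k
  congr 2
  simp [stEquiv]

lemma summable_pay {δ : ℝ} (h0 : 0 < δ) (h1 : δ < 1) (s : ℕ → Fin 2) :
    Summable (fun k : ℕ => δ ^ k * ((s k).val : ℝ)) := by
  apply Summable.of_nonneg_of_le (fun k => by positivity) (fun k => ?_)
    (summable_geometric_of_lt_one h0.le h1)
  have hb : ((s k).val : ℝ) ≤ 1 := by exact_mod_cast Fin.is_le (s k)
  nlinarith [pow_pos h0 k]

/-- the one-player reversed-time discounted game above admits no equilibrium:
for every run `r` there are a stage `n` and a run `r'` agreeing with `r` on all stages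
`k < n` with strictly larger payoff. -/
theorem discounted_no_equilibrium (δ : ℝ) (h0 : 0 < δ) (h1 : δ < 1) (r : Run (Fin 2)) :
    ∃ (n : Stage) (r' : Run (Fin 2)),
      (∀ k : Stage, k.1 < n.1 → r' k = r k) ∧ discPayoff δ r < discPayoff δ r' := by
  have h1δ : 0 < 1 - δ := by linarith
  by_cases hall : ∀ n : Stage, r n = 1
  · -- all ones: payoff 0; deviate to put a 0 at stage 0
    refine ⟨⟨0, le_refl 0⟩, fun k => if k.1 = 0 then 0 else 1, fun k hk => ?_, ?_⟩
    · have : k.1 ≠ 0 := by simpa using hk.ne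
      simp [this, hall k]
    · have hnotall : ¬ ∀ n : Stage, (fun k : Stage => if k.1 = 0 then (0 : Fin 2) else 1) n = 1 := by
        intro h
        have := h ⟨0, le_refl 0⟩
        simp at this
      rw [discPayoff, discPayoff, if_pos hall, if_neg hnotall, payoff_eq]
      apply mul_pos h1δ
      apply Summable.tsum_pos (summable_pay h0 h1 _) (fun k => by positivity) 1
      have : ((stEquiv 1).1 : ℤ) = -1 := stEquiv_val 1
      rw [show (if (stEquiv 1).1 = 0 then (0:Fin 2) else 1) = 1 by rw [this]; norm_num]
      simp [h0]
  · push_neg at hall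
    obtain ⟨m, hm⟩ := hall
    have h0m : r m = 0 := by
      have h2 := (r m).isLt
      have hne : (r m).val ≠ 1 := fun h => hm (Fin.ext h)
      apply Fin.ext; simp; omega
    set M : ℕ := (-m.1).toNat with hMdef
    have hM : m.1 = -(M : ℤ) := by
      have := Int.toNat_of_nonneg (neg_nonneg.2 m.2)
      omega
    refine ⟨⟨m.1 - 1, by omega⟩,
      fun k => if k.1 < m.1 - 1 then r k else if k.1 = m.1 - 1 then 0 else 1,
      fun k hk => ?_, ?_⟩
    · simp only at hk
      simp [hk]
    · set r' : Run (Fin 2) :=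
        fun k => if k.1 < m.1 - 1 then r k else if k.1 = m.1 - 1 then 0 else 1 with hr'
      have hnotall' : ¬ ∀ n : Stage, r' n = 1 := by
        intro h
        have := h ⟨m.1 - 1, by omega⟩
        simp [hr'] at this
      have hnotall : ¬ ∀ n : Stage, r n = 1 := by
        intro h; exact hm (h m)
      rw [discPayoff, discPayoff, if_neg hnotall, if_neg hnotall', payoff_eq, payoff_eq]
      set f : ℕ → ℝ := fun k => δ ^ k * ((r (stEquiv k)).val : ℝ) with hf
      set g : ℕ → ℝ := fun k => δ ^ k * ((r' (stEquiv k)).val : ℝ) with hg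
      have hsf : Summable f := summable_pay h0 h1 _
      have hsg : Summable g := summable_pay h0 h1 _
      have key : ∑' k, (g k - f k) = ∑ k ∈ Finset.range (M + 2), (g k - f k) := by
        apply tsum_eq_sum
        intro k hk
        have hk2 : (M : ℤ) + 2 ≤ k := by
          simp [Finset.mem_range] at hk; exact_mod_cast hk
        have : r' (stEquiv k) = r (stEquiv k) := by
          have hlt : (stEquiv k).1 < m.1 - 1 := by rw [stEquiv_val, hM]; omega
          simp [hr', hlt]
        simp [hg, hf, this]
      -- value of g, f on the relevant stages
      have hone : ∀ k : ℕ, k ≤ M → r' (stEquiv k) = 1 := by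
        intro k hk
        have h1' : ¬ (stEquiv k).1 < m.1 - 1 := by rw [stEquiv_val, hM]; omega
        have h2' : (stEquiv k).1 ≠ m.1 - 1 := by rw [stEquiv_val, hM]; omega
        simp [hr', h1', h2']
      have hterm_nonneg : ∀ k ∈ Finset.range (M + 1), 0 ≤ g k - f k := by
        intro k hk
        have hk' : k ≤ M := by simpa [Nat.lt_succ_iff] using Finset.mem_range.mp hk
        have : g k = δ ^ k := by simp [hg, hone k hk']
        have hfb : f k ≤ δ ^ k := by
          have hb : ((r (stEquiv k)).val : ℝ) ≤ 1 := by exact_mod_cast Fin.is_le _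
          have := pow_pos h0 k
          simp only [hf]; nlinarith
        linarith
      have hM_term : g M - f M = δ ^ M := by
        have hme : stEquiv M = m := by
          apply Subtype.ext; rw [stEquiv_val]; omega
        have : f M = 0 := by simp [hf, hme, h0m]
        have hg' : g M = δ ^ M := by simp [hg, hone M le_rfl]
        linarith
      have hM1_term : -δ ^ (M + 1) ≤ g (M + 1) - f (M + 1) := by
        have h1' : ¬ (stEquiv (M+1)).1 < m.1 - 1 := by rw [stEquiv_val, hM]; push_cast; omega
        have h2' : (stEquiv (M+1)).1 = m.1 - 1 := by rw [stEquiv_val, hM]; push_cast; omega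
        have hg' : g (M + 1) = 0 := by simp [hg, hr', h1', h2']
        have hfb : f (M + 1) ≤ δ ^ (M + 1) := by
          have hb : ((r (stEquiv (M+1))).val : ℝ) ≤ 1 := by exact_mod_cast Fin.is_le _
          have := pow_pos h0 (M + 1)
          simp only [hf]; nlinarith
        linarith
      have hsum_lb : δ ^ M - δ ^ (M + 1) ≤ ∑ k ∈ Finset.range (M + 2), (g k - f k) := by
        rw [Finset.sum_range_succ]
        have hle : δ ^ M ≤ ∑ k ∈ Finset.range (M + 1), (g k - f k) := by
          rw [← hM_term]
          exact Finset.single_le_sum hterm_nonneg (by simp)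
        linarith
      have hpos : 0 < ∑' k, (g k - f k) := by
        rw [key]
        have : 0 < δ ^ M - δ ^ (M + 1) := by
          have hp := pow_pos h0 M
          have : δ ^ (M + 1) = δ ^ M * δ := pow_succ δ M
          nlinarith
        linarith
      have hdiff : ∑' k, (g k - f k) = (∑' k, g k) - ∑' k, f k := Summable.tsum_sub hsg hsf
      rw [hdiff] at hpos
      have : ∑' k, f k < ∑' k, g k := by linarith
      exact mul_lt_mul_of_pos_left this h1δ
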